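/- arXiv:2511.21534 — 2 statements merged into one kernel-verified Lean document; each statement's English description precedes it below -/
import Mathlib

section
/- IPW identification with undefined potential outcomes (Proposition 3): under consistency given N, positivity, conditional exchangeability given (𝓕, N), and the assumption that the propensity scores do not depend on N, the estimand φ := Σ_{n=0}^{g_max} E[Y^(1) − Y^(0) | N=n]·P(N=n) = E[Y^(1) − Y^(0)] satisfies φ = E[ 1{A=1}·Y / π₁ ] − E[ 1{A=0}·Y / π₀ ]. -/
open MeasureTheory ProbabilityTheory Set

/-- The indicator function of a set, as a real-valued random variable. -/
noncomputable def ind {Ω : Type*} (s : Set Ω) : Ω → ℝ := s.indicator fun _ => 1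

lemma ind_mul_eq_indicator {Ω : Type*} (s : Set Ω) (f : Ω → ℝ) :
    (fun ω => f ω * ind s ω) = s.indicator f := by
  funext ω
  by_cases h : ω ∈ s <;> simp [ind, Set.indicator_apply, h]

lemma ind_mul_eq_indicator' {Ω : Type*} (s : Set Ω) (f : Ω → ℝ) :
    (fun ω => ind s ω * f ω) = s.indicator f := by
  funext ω
  by_cases h : ω ∈ s <;> simp [ind, Set.indicator_apply, h]

/-- Measurability of the consistency sum. -/
lemma ya_measurable {Ω : Type*} [mΩ : MeasurableSpace Ω] (gmax : ℕ) (G : Ω → ℕ)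
    (hG : Measurable G) (Ypo : ℕ → Ω → ℝ) (hYpo : ∀ g ≤ gmax, Measurable (Ypo g)) :
    Measurable (fun ω => ∑ g ∈ Finset.range (gmax + 1), ind {ω' | G ω' = g} ω * Ypo g ω) := by
  refine Finset.measurable_sum _ fun g hg => Measurable.mul ?_
    (hYpo g (Nat.lt_succ_iff.mp (Finset.mem_range.mp hg)))
  exact measurable_const.indicator (hG (measurableSet_singleton g))

/-- Integrability of the consistency sum. -/
lemma ya_integrable {Ω : Type*} [mΩ : MeasurableSpace Ω] {μ : Measure Ω}
    [IsProbabilityMeasure μ] (gmax : ℕ) (G : Ω → ℕ)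
    (hG : Measurable G) (Ypo : ℕ → Ω → ℝ) (hYpo : ∀ g ≤ gmax, MemLp (Ypo g) 2 μ) :
    Integrable (fun ω => ∑ g ∈ Finset.range (gmax + 1), ind {ω' | G ω' = g} ω * Ypo g ω) μ := by
  refine integrable_finset_sum _ fun g hg => ?_
  rw [show (fun ω => ind {ω' | G ω' = g} ω * Ypo g ω) = ({ω' | G ω' = g}).indicator (Ypo g) from
    ind_mul_eq_indicator' _ _]
  exact ((hYpo g (Nat.lt_succ_iff.mp (Finset.mem_range.mp hg))).integrable
    one_le_two).indicator (hG (measurableSet_singleton g))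

/-- Law of total expectation over the partition `{N = n}`. -/
lemma sum_cond_integral_eq_integral {Ω : Type*} [mΩ : MeasurableSpace Ω] {μ : Measure Ω}
    [IsProbabilityMeasure μ] (gmax : ℕ) (N : Ω → ℕ) (hN : ∀ ω, N ω ≤ gmax)
    (hNmeas : Measurable N) (hNpos : ∀ n ≤ gmax, 0 < μ {ω | N ω = n})
    (f : Ω → ℝ) (hf : Integrable f μ) :
    (∑ n ∈ Finset.range (gmax + 1),
        (∫ ω, f ω ∂(μ[|{ω | N ω = n}])) * (μ {ω | N ω = n}).toReal)
      = ∫ ω, f ω ∂μ := by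
  have hsum : ∀ n ∈ Finset.range (gmax + 1),
      (∫ ω, f ω ∂(μ[|{ω | N ω = n}])) * (μ {ω | N ω = n}).toReal
        = ∫ ω in {ω | N ω = n}, f ω ∂μ := by
    intro n hn
    have hne : μ {ω | N ω = n} ≠ 0 := (hNpos n (Nat.lt_succ_iff.mp (Finset.mem_range.mp hn))).ne'
    have hfin : μ {ω | N ω = n} ≠ ⊤ := measure_ne_top _ _
    have htR : (μ {ω | N ω = n}).toReal ≠ 0 := by
      simp [ENNReal.toReal_eq_zero_iff, hne, hfin]
    have hcond : μ[|{ω | N ω = n}] = (μ {ω | N ω = n})⁻¹ • μ.restrict {ω | N ω = n} := rfl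
    rw [hcond, integral_smul_measure, ENNReal.toReal_inv, smul_eq_mul]
    field_simp
  rw [Finset.sum_congr rfl hsum]
  have hunion : (⋃ n ∈ Finset.range (gmax + 1), {ω | N ω = n}) = univ := by
    ext ω
    simp only [mem_iUnion, mem_setOf_eq, mem_univ, iff_true, Finset.mem_range]
    exact ⟨N ω, Nat.lt_succ_of_le (hN ω), rfl⟩
  rw [← integral_biUnion_finset (Finset.range (gmax + 1)) (s := fun n => {ω | N ω = n})
    (fun n _ => hNmeas (measurableSet_singleton n))
    (fun i _ j _ hij => by
      simp only [Function.onFun, Set.disjoint_left, mem_setOf_eq]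
      rintro ω rfl h
      exact hij h)
    (fun n _ => hf.integrableOn), hunion, setIntegral_univ]

/-- Pull-out/factorization: if the conditional expectation of intersections factorizes
(conditional independence of `f` and the set `B`), then the conditional expectation of
`f * ind B` factorizes. -/
lemma condexp_mul_ind_of_factorized
    {Ω : Type*} {m' : MeasurableSpace Ω} [mΩ : MeasurableSpace Ω]
    [StandardBorelSpace Ω] [Nonempty Ω]
    {μ : Measure Ω} [IsProbabilityMeasure μ] (hm' : m' ≤ mΩ)
    {f : Ω → ℝ} (hf : Measurable f) (hfint : Integrable f μ)
    {B : Set Ω} (hB : MeasurableSet B)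
    (h1 : ∀ s : Set ℝ, MeasurableSet s →
      (μ⟦f ⁻¹' s ∩ B | m'⟧) =ᵐ[μ] fun ω => (μ⟦f ⁻¹' s | m'⟧) ω * (μ⟦B | m'⟧) ω) :
    μ[fun ω => f ω * ind B ω | m']
      =ᵐ[μ] fun ω => (μ[f | m']) ω * (μ[ind B | m']) ω := by
  classical
  have hfB : (fun ω => f ω * ind B ω) = B.indicator f := ind_mul_eq_indicator _ _
  have hfBint : Integrable (fun ω => f ω * ind B ω) μ := by
    rw [hfB]; exact hfint.indicator hB
  -- a.e. kernel-level factorization on the π-system of rational rays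
  have hae_sets : ∀ᵐ ω ∂μ, ∀ q : ℚ,
      condExpKernel μ m' ω (f ⁻¹' Iio (q : ℝ) ∩ B)
        = condExpKernel μ m' ω (f ⁻¹' Iio (q : ℝ)) * condExpKernel μ m' ω B := by
    rw [ae_all_iff]
    intro q
    have hs : MeasurableSet (f ⁻¹' Iio (q : ℝ)) := hf measurableSet_Iio
    have e1 := condExpKernel_ae_eq_condExp (μ := μ) hm' (hs.inter hB)
    have e2 := condExpKernel_ae_eq_condExp (μ := μ) hm' hs
    have e3 := condExpKernel_ae_eq_condExp (μ := μ) hm' hB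
    have e4 := h1 (Iio (q : ℝ)) measurableSet_Iio
    filter_upwards [e1, e2, e3, e4] with ω h1' h2' h3' h4'
    refine (ENNReal.toReal_eq_toReal_iff' (measure_ne_top _ _)
      (ENNReal.mul_ne_top (measure_ne_top _ _) (measure_ne_top _ _))).mp ?_
    rw [ENNReal.toReal_mul, ← measureReal_def, ← measureReal_def, ← measureReal_def, h1', h2', h3']
    exact h4'
  have hcf := condExp_ae_eq_integral_condExpKernel (μ := μ) hm' hfint
  have hcfB := condExp_ae_eq_integral_condExpKernel (μ := μ) hm' hfBint
  have hcB := condExpKernel_ae_eq_condExp (μ := μ) hm' hB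
  filter_upwards [hae_sets, hcf, hcfB, hcB] with ω hω h2 h3 h4
  rw [h3, h2]
  show (∫ y, f y * ind B y ∂condExpKernel μ m' ω)
      = (∫ y, f y ∂condExpKernel μ m' ω) * (μ⟦B | m'⟧) ω
  rw [← h4]
  set ν := condExpKernel μ m' ω with hν
  have hext : (ν.restrict B).map f = (ν B) • (ν.map f) := by
    have hfin2 : IsFiniteMeasure ((ν B) • ν.map f) := by
      constructor
      rw [Measure.smul_apply, Measure.map_apply hf .univ, smul_eq_mul]
      exact ENNReal.mul_lt_top (measure_lt_top _ _) (measure_lt_top _ _)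
    refine ext_of_generate_finite _
      (BorelSpace.measurable_eq.trans Real.borel_eq_generateFrom_Iio_rat)
      Real.isPiSystem_Iio_rat ?_ ?_
    · rintro s hs
      simp only [mem_iUnion, mem_singleton_iff] at hs
      obtain ⟨q, rfl⟩ := hs
      rw [Measure.map_apply hf measurableSet_Iio, Measure.restrict_apply (hf measurableSet_Iio),
        Measure.smul_apply, Measure.map_apply hf measurableSet_Iio, smul_eq_mul, mul_comm]
      exact hω q
    · rw [Measure.map_apply hf .univ, preimage_univ, Measure.restrict_apply .univ, univ_inter,
        Measure.smul_apply, Measure.map_apply hf .univ, preimage_univ, measure_univ,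
        smul_eq_mul, mul_one]
  calc ∫ y, f y * ind B y ∂ν = ∫ y, B.indicator f y ∂ν := by rw [hfB]
    _ = ∫ y in B, f y ∂ν := integral_indicator hB
    _ = ∫ x, x ∂((ν.restrict B).map f) :=
        (integral_map hf.aemeasurable aestronglyMeasurable_id).symm
    _ = ∫ x, x ∂((ν B) • ν.map f) := by rw [hext]
    _ = (ν B).toReal • ∫ x, x ∂(ν.map f) := integral_smul_measure _ _
    _ = (ν B).toReal • ∫ y, f y ∂ν := by
        rw [show (∫ x, x ∂(ν.map f)) = ∫ y, f y ∂ν from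
          integral_map hf.aemeasurable aestronglyMeasurable_id]
    _ = (∫ y, f y ∂ν) * (ν B).toReal := by rw [smul_eq_mul, mul_comm]

/-- The IPW step: under conditional independence and positivity,
`E[1{A=a}·f/π] = E[f]`. -/
lemma ipw_step
    {Ω : Type*} {m' : MeasurableSpace Ω} [mΩ : MeasurableSpace Ω]
    [StandardBorelSpace Ω] [Nonempty Ω]
    {μ : Measure Ω} [IsProbabilityMeasure μ] (hm' : m' ≤ mΩ)
    {f : Ω → ℝ} (hf : Measurable f) (hfint : Integrable f μ)
    {A : Ω → ℕ} (hA : Measurable A) (a : ℕ)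
    (hindep : CondIndepFun m' hm' f A μ)
    {π : Ω → ℝ} (hπsm : StronglyMeasurable[m'] π)
    (hπeq : μ[ind {ω' | A ω' = a} | m'] =ᵐ[μ] π)
    (hπpos : ∀ᵐ ω ∂μ, 0 < π ω)
    (hint : Integrable (fun ω => ind {ω' | A ω' = a} ω * f ω / π ω) μ) :
    ∫ ω, ind {ω' | A ω' = a} ω * f ω / π ω ∂μ = ∫ ω, f ω ∂μ := by
  classical
  haveI : SigmaFinite (μ.trim hm') := by
    have : IsFiniteMeasure (μ.trim hm') := isFiniteMeasure_trim hm'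
    infer_instance
  set B : Set Ω := {ω' | A ω' = a} with hBdef
  have hB : MeasurableSet B := hA (measurableSet_singleton a)
  have hrw : (fun ω => ind B ω * f ω / π ω) = fun ω => (π ω)⁻¹ * (f ω * ind B ω) := by
    funext ω
    rw [div_eq_mul_inv]
    ring
  have hint' : Integrable (fun ω => (π ω)⁻¹ * (f ω * ind B ω)) μ := by
    rw [← hrw]; exact hint
  have h1 : ∀ s : Set ℝ, MeasurableSet s →
      (μ⟦f ⁻¹' s ∩ B | m'⟧) =ᵐ[μ] fun ω => (μ⟦f ⁻¹' s | m'⟧) ω * (μ⟦B | m'⟧) ω := by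
    intro s hs
    exact (condIndepFun_iff_condExp_inter_preimage_eq_mul (hm' := hm') hf hA).mp
      hindep s {a} hs (measurableSet_singleton a)
  have hprod := condexp_mul_ind_of_factorized hm' hf hfint hB h1
  have hπinv : StronglyMeasurable[m'] (fun ω => (π ω)⁻¹) :=
    hπsm.measurable.inv.stronglyMeasurable
  have hg : Integrable (fun ω => f ω * ind B ω) μ := by
    rw [ind_mul_eq_indicator]; exact hfint.indicator hB
  have hmul := condExp_mul_of_stronglyMeasurable_left hπinv (by exact hint') (by exact hg)
  have hcc : μ[fun ω => (π ω)⁻¹ * (f ω * ind B ω) | m'] =ᵐ[μ] μ[f | m'] := by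
    refine (by exact hmul : μ[fun ω => (π ω)⁻¹ * (f ω * ind B ω) | m'] =ᵐ[μ]
      fun ω => (π ω)⁻¹ * (μ[fun ω' => f ω' * ind B ω' | m']) ω).trans ?_
    filter_upwards [hprod, hπeq, hπpos] with ω hp hπ' hpos
    rw [hp, hπ']
    field_simp
  calc ∫ ω, ind B ω * f ω / π ω ∂μ
      = ∫ ω, (π ω)⁻¹ * (f ω * ind B ω) ∂μ := by rw [hrw]
    _ = ∫ ω, (μ[fun ω' => (π ω')⁻¹ * (f ω' * ind B ω') | m']) ω ∂μ :=
        (integral_condExp hm').symm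
    _ = ∫ ω, (μ[f | m']) ω ∂μ := integral_congr_ae hcc
    _ = ∫ ω, f ω ∂μ := integral_condExp hm'

/-- **IPW identification with undefined potential outcomes (Proposition 3).**  Under
consistency given `N`, positivity, conditional exchangeability given `(𝓕, N)`, and the
assumption that the propensity scores do not depend on `N`, the estimand
`φ = Σ_n E[Y^(1) − Y^(0) | N=n]·P(N=n) = E[Y^(1) − Y^(0)]` satisfies
`φ = E[1{A=1}·Y/π₁] − E[1{A=0}·Y/π₀]`. -/
theorem ipw_identification_undefined_potential_outcomes
    {Ω : Type*} [mΩ : MeasurableSpace Ω] [StandardBorelSpace Ω] [Nonempty Ω]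
    (μ : Measure Ω) [IsProbabilityMeasure μ]
    (gmax : ℕ)
    (A N G : Ω → ℕ) (hA : ∀ ω, A ω ≤ 1) (hN : ∀ ω, N ω ≤ gmax)
    (hGN : ∀ᵐ ω ∂μ, G ω ≤ N ω)
    (hAmeas : Measurable A) (hNmeas : Measurable N) (hGmeas : Measurable G)
    (Ypo : ℕ → ℕ → Ω → ℝ)
    (hYpomeas : ∀ a ≤ 1, ∀ g ≤ gmax, Measurable (Ypo a g))
    (hYposq : ∀ a ≤ 1, ∀ g ≤ gmax, MemLp (Ypo a g) 2 μ)
    (Ya : ℕ → Ω → ℝ)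
    (hYa : ∀ a ω, Ya a ω = ∑ g ∈ Finset.range (gmax + 1), ind {ω' | G ω' = g} ω * Ypo a g ω)
    (Y : Ω → ℝ)
    (hY : ∀ ω, Y ω = ind {ω' | A ω' = 1} ω * Ya 1 ω + ind {ω' | A ω' = 0} ω * Ya 0 ω)
    (mF : MeasurableSpace Ω) (hF : mF ≤ mΩ)
    (π : ℕ → Ω → ℝ)
    (hπ : ∀ a, π a = μ[ind {ω | A ω = a} | mF])
    -- the propensity score does not depend on N
    (hπN : ∀ a ≤ 1,
      μ[ind {ω | A ω = a} | mF ⊔ MeasurableSpace.comap N inferInstance] =ᵐ[μ] π a)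
    (hπpos : ∀ a ≤ 1, ∀ᵐ ω ∂μ, 0 < π a ω)
    (hNpos : ∀ n ≤ gmax, 0 < μ {ω | N ω = n})
    -- conditional exchangeability given (𝓕, N)
    (hexch : ∀ a ≤ 1,
      CondIndepFun (mF ⊔ MeasurableSpace.comap N inferInstance)
        (sup_le hF hNmeas.comap_le) (Ya a) A μ)
    (hint : ∀ a ≤ 1, Integrable (fun ω => ind {ω' | A ω' = a} ω * Y ω / π a ω) μ) :
    (∑ n ∈ Finset.range (gmax + 1),
        (∫ ω, (Ya 1 ω - Ya 0 ω) ∂(μ[|{ω | N ω = n}])) * (μ {ω | N ω = n}).toReal)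
      = ∫ ω, (Ya 1 ω - Ya 0 ω) ∂μ
    ∧ ∫ ω, (Ya 1 ω - Ya 0 ω) ∂μ
      = (∫ ω, ind {ω' | A ω' = 1} ω * Y ω / π 1 ω ∂μ)
        - ∫ ω, ind {ω' | A ω' = 0} ω * Y ω / π 0 ω ∂μ := by
  classical
  have hYam : ∀ a ≤ 1, Measurable[mΩ] (Ya a) := by
    intro a ha
    rw [funext (hYa a)]
    exact ya_measurable (mΩ := mΩ) gmax G hGmeas (Ypo a) (fun g hg => hYpomeas a ha g hg)
  have hYaint : ∀ a ≤ 1, Integrable (Ya a) μ := by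
    intro a ha
    rw [funext (hYa a)]
    exact ya_integrable (mΩ := mΩ) gmax G hGmeas (Ypo a) (fun g hg => hYposq a ha g hg)
  have hYdiff : Integrable (fun ω => Ya 1 ω - Ya 0 ω) μ :=
    (hYaint 1 le_rfl).sub (hYaint 0 (by norm_num))
  -- consistency: on {A = a}, Y = Ya a
  have hAY : ∀ a ≤ 1, ∀ ω, ind {ω' | A ω' = a} ω * Y ω = ind {ω' | A ω' = a} ω * Ya a ω := by
    intro a ha ω
    by_cases h : A ω = a
    · rw [hY ω]
      interval_cases a
      · have h1 : ω ∉ {ω' | A ω' = 1} := by simp [h]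
        have h0 : ω ∈ {ω' | A ω' = 0} := h
        simp [ind, Set.indicator_apply, h0, h1]
      · have h1 : ω ∈ {ω' | A ω' = 1} := h
        have h0 : ω ∉ {ω' | A ω' = 0} := by simp [h]
        simp [ind, Set.indicator_apply, h0, h1]
    · have : ω ∉ {ω' | A ω' = a} := h
      simp [ind, Set.indicator_apply, this]
  have key : ∀ a ≤ 1,
      ∫ ω, ind {ω' | A ω' = a} ω * Y ω / π a ω ∂μ = ∫ ω, Ya a ω ∂μ := by
    intro a ha
    have hrw : (fun ω => ind {ω' | A ω' = a} ω * Y ω / π a ω)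
        = fun ω => ind {ω' | A ω' = a} ω * Ya a ω / π a ω := by
      funext ω; rw [hAY a ha ω]
    have hπsmF : StronglyMeasurable[mF] (π a) := by
      rw [hπ a]; exact stronglyMeasurable_condExp
    have hπsm : StronglyMeasurable[mF ⊔ MeasurableSpace.comap N inferInstance] (π a) :=
      hπsmF.mono le_sup_left
    have hintYa : Integrable (fun ω => ind {ω' | A ω' = a} ω * Ya a ω / π a ω) μ := by
      rw [← hrw]; exact hint a ha
    rw [hrw]
    exact ipw_step (mΩ := mΩ) (sup_le hF hNmeas.comap_le) (hYam a ha) (hYaint a ha)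
      hAmeas a (hexch a ha) hπsm (hπN a ha) (hπpos a ha) hintYa
  refine ⟨sum_cond_integral_eq_integral (mΩ := mΩ) gmax N hN hNmeas hNpos _ hYdiff, ?_⟩
  rw [integral_sub (hYaint 1 le_rfl) (hYaint 0 (by norm_num)),
    key 1 le_rfl, key 0 (by norm_num)]
end

section
/- Bias decomposition with undefined potential outcomes, transport part (Theorem 3, second display): ψ − φ₂ = (ψ − φ₁) + Σ_{g=0}^{g_max} [ Cov( τ(g), υ(g) | V_g=1 ) + E[ τ(g) | V_g=1 ] · ( P(G=g|S=1) − P(G=g|S=2) ) ], where V_g := 1{N ≥ g}, τ(g) := Y^(1,g) − Y^(0,g) (meaningful on {V_g=1}), υ(g) := P(G=g | S=1, V_g=1, 𝓗)·P(V_g=1|S=1) − P(G=g | S=2, V_g=1, 𝓗)·P(V_g=1|S=2), with P(G=g|S=s,V_g=1,𝓗) the 𝓗-measurable conditional probability of {G=g} given 𝓗 under P(·|S=s,V_g=1), and Cov(·,·|V_g=1), E[·|V_g=1] taken under P(·|V_g=1). -/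
open MeasureTheory ProbabilityTheory Set
set_option linter.unusedSectionVars false
set_option linter.unusedVariables false
set_option maxHeartbeats 2000000

/-- The covariance of two real random variables, `Cov(f,g) = E[f·g] − E[f]·E[g]`. -/
noncomputable def cov {Ω : Type*} {m : MeasurableSpace Ω} (μ : MeasureTheory.Measure Ω)
    (f g : Ω → ℝ) : ℝ :=
  (∫ ω, f ω * g ω ∂μ) - (∫ ω, f ω ∂μ) * ∫ ω, g ω ∂μ

section AuxB
variable {Ω : Type*} [mΩ : MeasurableSpace Ω]

lemma ind_mul (s : Set Ω) (f : Ω → ℝ) : (fun ω => ind s ω * f ω) = s.indicator f := by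
  funext ω; by_cases h : ω ∈ s <;> simp [ind, indicator, h]

lemma mul_ind (s : Set Ω) (f : Ω → ℝ) : (fun ω => f ω * ind s ω) = s.indicator f := by
  funext ω; by_cases h : ω ∈ s <;> simp [ind, indicator, h]

lemma ind_nonneg {s : Set Ω} (ω : Ω) : 0 ≤ ind s ω := by
  by_cases h : ω ∈ s <;> simp [ind, indicator, h]

lemma abs_ind_le_one {s : Set Ω} (ω : Ω) : |ind s ω| ≤ 1 := by
  by_cases h : ω ∈ s <;> simp [ind, indicator, h]

lemma measurable_ind {s : Set Ω} (hs : MeasurableSet s) : Measurable (ind s) :=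
  measurable_const.indicator hs

lemma integral_ind {μ : Measure Ω} [IsFiniteMeasure μ] {s : Set Ω} (hs : MeasurableSet s) :
    ∫ ω, ind s ω ∂μ = (μ s).toReal := by
  rw [ind, show (fun _ : Ω => (1:ℝ)) = 1 from rfl, integral_indicator_one hs, measureReal_def]

lemma integrable_ind {μ : Measure Ω} [IsFiniteMeasure μ] {s : Set Ω} (hs : MeasurableSet s) :
    Integrable (fun ω => ind s ω) μ := by
  rw [ind]; exact (integrable_const 1).indicator hs

lemma setIntegral_ind {μ : Measure Ω} [IsFiniteMeasure μ] {s H : Set Ω} (hs : MeasurableSet s)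
    (hH : MeasurableSet H) : ∫ ω in H, ind s ω ∂μ = (μ (s ∩ H)).toReal := by
  rw [integral_ind (μ := μ.restrict H) hs, Measure.restrict_apply hs]

lemma integral_cond (μ : Measure Ω) (T : Set Ω) (f : Ω → ℝ) :
    ∫ ω, f ω ∂(μ[|T]) = (μ T).toReal⁻¹ * ∫ ω in T, f ω ∂μ := by
  rw [ProbabilityTheory.cond, integral_smul_measure, ENNReal.toReal_inv, smul_eq_mul]

lemma setIntegral_cond (μ : Measure Ω) {T U : Set Ω} (hU : MeasurableSet U) (f : Ω → ℝ) :
    ∫ ω in U, f ω ∂(μ[|T]) = (μ T).toReal⁻¹ * ∫ ω in T ∩ U, f ω ∂μ := by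
  rw [ProbabilityTheory.cond, Measure.restrict_smul, integral_smul_measure,
    Measure.restrict_restrict hU, inter_comm U T, ENNReal.toReal_inv, smul_eq_mul]

lemma MeasureTheory.Integrable.cond_meas {μ : Measure Ω} {f : Ω → ℝ} (hf : Integrable f μ) (T : Set Ω)
    (hT : μ T ≠ 0) : Integrable f (μ[|T]) := by
  rw [ProbabilityTheory.cond]
  exact (hf.restrict).smul_measure (by simp [hT])

lemma ae_cond {μ : Measure Ω} {T : Set Ω} {p : Ω → Prop} (h : ∀ᵐ ω ∂μ, p ω) :
    ∀ᵐ ω ∂μ[|T], p ω :=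
  cond_absolutelyContinuous.ae_le h

lemma integrable_of_ae_bdd {μ : Measure Ω} [IsFiniteMeasure μ] {h : Ω → ℝ} (C : ℝ)
    (hmeas : AEStronglyMeasurable h μ) (hbdd : ∀ᵐ ω ∂μ, |h ω| ≤ C) : Integrable h μ :=
  (integrable_const C).mono' hmeas (by simpa [Real.norm_eq_abs] using hbdd)

lemma indep_integral {μ : Measure Ω} [IsProbabilityMeasure μ] {m' : MeasurableSpace Ω}
    (hm' : m' ≤ mΩ) {S : Ω → ℕ} (hSmeas : Measurable[mΩ] S)
    (hind : Indep (MeasurableSpace.comap S inferInstance) m' μ)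
    {h : Ω → ℝ} (hmeas : Measurable[m'] h) (C : ℝ) (hbdd : ∀ᵐ ω ∂μ, |h ω| ≤ C) (s : ℕ) :
    ∫ ω, ind {ω' | S ω' = s} ω * h ω ∂μ = (μ {ω' | S ω' = s}).toReal * ∫ ω, h ω ∂μ := by
  have hSh : IndepFun S h μ := by
    rw [indepFun_iff_measure_inter_preimage_eq_mul]
    intro u v hu hv
    exact (Indep_iff _ _ _).1 hind _ _ ⟨u, hu, rfl⟩ (hmeas hv)
  have hmeas' : Measurable[mΩ] h := hmeas.mono hm' le_rfl
  have hφS : IndepFun (fun ω => ind {ω' | S ω' = s} ω) h μ := by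
    have := hSh.comp (φ := fun n => if n = s then (1:ℝ) else 0) (ψ := id)
      (measurable_of_countable _) measurable_id
    convert this using 2 with ω
    by_cases hω : S ω = s <;> simp [ind, indicator, hω, Function.comp]
    rfl
  have hsmeas : MeasurableSet[mΩ] {ω' | S ω' = s} := hSmeas (measurableSet_singleton s)
  have hint1 : Integrable (fun ω => ind {ω' | S ω' = s} ω) μ :=
    integrable_ind (mΩ := mΩ) (μ := μ) hsmeas
  have hint2 : Integrable h μ :=
    integrable_of_ae_bdd (mΩ := mΩ) (μ := μ) C hmeas'.aestronglyMeasurable hbdd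
  rw [show (∫ ω, ind {ω' | S ω' = s} ω * h ω ∂μ)
      = ∫ ω, ((fun ω => ind {ω' | S ω' = s} ω) * h) ω ∂μ from rfl,
    hφS.integral_mul_eq_mul_integral hint1.aestronglyMeasurable hint2.aestronglyMeasurable, integral_ind (mΩ := mΩ) (μ := μ) hsmeas]

/-- Product rule under conditional independence, one factor an indicator of a preimage. -/
lemma integral_mul_ind_of_condIndep [StandardBorelSpace Ω] [Nonempty Ω]
    (ν : Measure Ω) [IsProbabilityMeasure ν] {m' : MeasurableSpace Ω} (hm' : m' ≤ mΩ)
    {X : Ω → ℝ} (hXm : Measurable[mΩ] X)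
    {W : Ω → ℕ × ℕ} (hW : Measurable[mΩ] W)
    (hci : CondIndepFun m' hm' X W ν) (t : Set (ℕ × ℕ)) :
    ∫ ω, X ω * ind (W ⁻¹' t) ω ∂ν = ∫ ω, X ω * (ν[ind (W ⁻¹' t)|m']) ω ∂ν := by
  letI : MeasurableSpace Ω := mΩ
  haveI : SigmaFinite (ν.trim hm') := (isFiniteMeasure_trim hm').toSigmaFinite
  have ht : MeasurableSet t := (Set.to_countable t).measurableSet
  set B := W ⁻¹' t with hBdef
  have hB : MeasurableSet B := hW ht
  set q : Ω → ℝ := ν[ind B|m'] with hq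
  have hqm : StronglyMeasurable[m'] q := stronglyMeasurable_condExp
  have hqmΩ : Measurable q := (hqm.measurable).mono hm' le_rfl
  have hqi : Integrable q ν := integrable_condExp
  have hq0 : 0 ≤ᵐ[ν] q := condExp_nonneg (Filter.Eventually.of_forall fun ω => ind_nonneg ω)
  have hkey : (ν.restrict B).map X = (ν.withDensity (fun ω => ENNReal.ofReal (q ω))).map X := by
    refine Measure.ext fun u hu => ?_
    rw [Measure.map_apply hXm hu, Measure.map_apply hXm hu, Measure.restrict_apply (hXm hu),
      withDensity_apply _ (hXm hu)]
    have hXu : MeasurableSet (X ⁻¹' u) := hXm hu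
    have hiff := (condIndepFun_iff_condExp_inter_preimage_eq_mul (μ := ν) hXm hW).1 hci u t hu ht
    have h1 : (ν (X ⁻¹' u ∩ B)).toReal = ∫ ω, ind (X ⁻¹' u ∩ B) ω ∂ν :=
      (integral_ind (hXu.inter hB)).symm
    have h2 : ∫ ω, ind (X ⁻¹' u ∩ B) ω ∂ν = ∫ ω, (ν[ind (X ⁻¹' u ∩ B)|m']) ω ∂ν :=
      (integral_condExp hm').symm
    have h3 : ∫ ω, (ν[ind (X ⁻¹' u ∩ B)|m']) ω ∂ν
        = ∫ ω, (ν[ind (X ⁻¹' u)|m']) ω * q ω ∂ν := by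
      refine integral_congr_ae ?_
      filter_upwards [hiff] with ω hω using hω
    have hmulint : Integrable (fun ω => q ω * ind (X ⁻¹' u) ω) ν := by
      refine hqi.abs.mono' ((hqmΩ.mul (measurable_ind hXu)).aestronglyMeasurable) ?_
      refine Filter.Eventually.of_forall fun ω => ?_
      rw [Real.norm_eq_abs, abs_mul]
      calc |q ω| * |ind (X ⁻¹' u) ω| ≤ |q ω| * 1 :=
            mul_le_mul_of_nonneg_left (abs_ind_le_one ω) (abs_nonneg _)
        _ = |q ω| := mul_one _
    have hpull : ν[fun ω => q ω * ind (X ⁻¹' u) ω|m']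
        =ᵐ[ν] fun ω => q ω * (ν[ind (X ⁻¹' u)|m']) ω :=
      condExp_mul_of_stronglyMeasurable_left hqm hmulint (integrable_ind hXu)
    have h4 : ∫ ω, (ν[ind (X ⁻¹' u)|m']) ω * q ω ∂ν = ∫ ω, q ω * ind (X ⁻¹' u) ω ∂ν := by
      rw [show (∫ ω, (ν[ind (X ⁻¹' u)|m']) ω * q ω ∂ν)
          = ∫ ω, q ω * (ν[ind (X ⁻¹' u)|m']) ω ∂ν from by simp [mul_comm]]
      rw [integral_congr_ae hpull.symm, integral_condExp hm']
    have h5 : ∫ ω, q ω * ind (X ⁻¹' u) ω ∂ν = ∫ ω in X ⁻¹' u, q ω ∂ν := by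
      rw [mul_ind, integral_indicator hXu]
    have hreal : (ν (X ⁻¹' u ∩ B)).toReal = ∫ ω in X ⁻¹' u, q ω ∂ν := by
      rw [h1, h2, h3, h4, h5]
    have hlint : ∫⁻ ω in X ⁻¹' u, ENNReal.ofReal (q ω) ∂ν
        = ENNReal.ofReal (∫ ω in X ⁻¹' u, q ω ∂ν) :=
      (ofReal_integral_eq_lintegral_ofReal hqi.integrableOn (ae_restrict_of_ae hq0)).symm
    rw [hlint, ← hreal, ENNReal.ofReal_toReal (measure_ne_top _ _)]
  have hL : ∫ ω, X ω * ind B ω ∂ν = ∫ x, x ∂((ν.restrict B).map X) := by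
    rw [mul_ind, integral_indicator hB]
    exact (integral_map hXm.aemeasurable aestronglyMeasurable_id).symm
  have hR1 : ∫ x, x ∂((ν.withDensity (fun ω => ENNReal.ofReal (q ω))).map X)
      = ∫ ω, X ω ∂(ν.withDensity (fun ω => ENNReal.ofReal (q ω))) :=
    integral_map hXm.aemeasurable aestronglyMeasurable_id
  have hR2 : ∫ ω, X ω ∂(ν.withDensity (fun ω => ENNReal.ofReal (q ω)))
      = ∫ ω, (q ω).toNNReal • X ω ∂ν :=
    integral_withDensity_eq_integral_smul hqmΩ.real_toNNReal X
  have hR3 : ∫ ω, (q ω).toNNReal • X ω ∂ν = ∫ ω, X ω * q ω ∂ν := by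
    refine integral_congr_ae ?_
    filter_upwards [hq0] with ω h0
    simp [NNReal.smul_def, Real.coe_toNNReal _ h0, mul_comm]
  rw [hL, hkey, hR1, hR2, hR3]

lemma condexp_ind_eq_pg (μ : Measure Ω) [IsProbabilityMeasure μ]
    {m' : MeasurableSpace Ω} (hm' : m' ≤ mΩ)
    {Ts Vg Gg : Set Ω} (hTs : MeasurableSet[mΩ] Ts) (hVg : MeasurableSet[mΩ] Vg)
    (hGg : MeasurableSet[mΩ] Gg)
    (hTVpos : μ (Ts ∩ Vg) ≠ 0) (hVpos : μ Vg ≠ 0)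
    (hint : ∀ h : Ω → ℝ, Measurable[m'] h → (∀ᵐ ω ∂(μ[|Vg]), |h ω| ≤ 1) →
      ∫ ω, ind Ts ω * h ω ∂(μ[|Vg]) = ((μ[|Vg]) Ts).toReal * ∫ ω, h ω ∂(μ[|Vg]))
    {pg : Ω → ℝ} (hpgdef : pg = (μ[|Ts ∩ Vg])[ind Gg | m'])
    (hpgm : Measurable[m'] pg) (hpgb : ∀ᵐ ω ∂μ, 0 ≤ pg ω ∧ pg ω ≤ 1) :
    (μ[|Vg])[ind (Ts ∩ Gg) | m'] =ᵐ[μ[|Vg]] fun ω => ((μ[|Vg]) Ts).toReal * pg ω := by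
  letI : MeasurableSpace Ω := mΩ
  haveI hν : IsProbabilityMeasure (μ[|Vg]) := cond_isProbabilityMeasure hVpos
  haveI hνs : IsProbabilityMeasure (μ[|Ts ∩ Vg]) := cond_isProbabilityMeasure hTVpos
  haveI : SigmaFinite ((μ[|Vg]).trim hm') := (isFiniteMeasure_trim hm').toSigmaFinite
  haveI : SigmaFinite ((μ[|Ts ∩ Vg]).trim hm') := (isFiniteMeasure_trim hm').toSigmaFinite
  set ν := μ[|Vg] with hνdef
  set k : ℝ := (ν Ts).toReal with hk
  have hpgmΩ : Measurable[mΩ] pg := hpgm.mono hm' le_rfl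
  have ha : (μ Vg).toReal ≠ 0 := by
    simp only [ne_eq, ENNReal.toReal_eq_zero_iff, measure_ne_top, or_false]; exact hVpos
  have hb : (μ (Ts ∩ Vg)).toReal ≠ 0 := by
    simp only [ne_eq, ENNReal.toReal_eq_zero_iff, measure_ne_top, or_false]; exact hTVpos
  refine (ae_eq_condExp_of_forall_setIntegral_eq hm'
    (integrable_ind (mΩ := mΩ) (μ := ν) (hTs.inter hGg)) ?_ ?_ ?_).symm
  · intro H hH _
    refine Integrable.integrableOn ?_
    refine (integrable_const (|k| + 1)).mono'
      ((hpgmΩ.const_mul k).aestronglyMeasurable) ?_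
    filter_upwards [ae_cond (T := Vg) hpgb] with ω hω
    rw [Real.norm_eq_abs, abs_mul]
    have : |pg ω| ≤ 1 := abs_le.2 ⟨by linarith [hω.1], hω.2⟩
    nlinarith [abs_nonneg k, abs_nonneg (pg ω)]
  · intro H hH _
    have hHΩ : MeasurableSet[mΩ] H := hm' H hH
    have l1 : ∫ ω in H, k * pg ω ∂ν = k * ∫ ω in H, pg ω ∂ν := integral_const_mul k _
    have hindH : Measurable[m'] (ind H) := (@measurable_const ℝ Ω _ m' 1).indicator hH
    have e1 : ∫ ω, ind Ts ω * (ind H ω * pg ω) ∂ν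
        = k * ∫ ω, ind H ω * pg ω ∂ν := by
      refine hint _ (hindH.mul hpgm) ?_
      filter_upwards [ae_cond (T := Vg) hpgb] with ω hω
      rw [abs_mul]
      have h1 : |ind H ω| ≤ 1 := abs_ind_le_one ω
      have h2 : |pg ω| ≤ 1 := abs_le.2 ⟨by linarith [hω.1], hω.2⟩
      nlinarith [abs_nonneg (ind H ω), abs_nonneg (pg ω)]
    have e2 : ∫ ω, ind H ω * pg ω ∂ν = ∫ ω in H, pg ω ∂ν := by
      rw [ind_mul, integral_indicator hHΩ]
    have e3 : ∫ ω, ind Ts ω * (ind H ω * pg ω) ∂ν = ∫ ω in Ts ∩ H, pg ω ∂ν := by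
      rw [show (fun ω => ind Ts ω * (ind H ω * pg ω)) = (Ts ∩ H).indicator pg from by
        funext ω; by_cases h1 : ω ∈ Ts <;> by_cases h2 : ω ∈ H <;>
          simp [ind, indicator, h1, h2], integral_indicator (hTs.inter hHΩ)]
    have e4 : ∫ ω in Ts ∩ H, pg ω ∂ν
        = (μ Vg).toReal⁻¹ * ∫ ω in (Ts ∩ Vg) ∩ H, pg ω ∂μ := by
      have hsets4 : Vg ∩ (Ts ∩ H) = (Ts ∩ Vg) ∩ H := by
        ext ω; simp only [mem_inter_iff]; tauto
      rw [hνdef, setIntegral_cond μ (hTs.inter hHΩ) pg, hsets4]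
    have e5 : ∫ ω in H, pg ω ∂(μ[|Ts ∩ Vg])
        = (μ (Ts ∩ Vg)).toReal⁻¹ * ∫ ω in (Ts ∩ Vg) ∩ H, pg ω ∂μ :=
      setIntegral_cond μ hHΩ pg
    have e7 : ∫ ω in H, pg ω ∂(μ[|Ts ∩ Vg]) = ∫ ω in H, ind Gg ω ∂(μ[|Ts ∩ Vg]) := by
      rw [hpgdef]
      exact setIntegral_condExp hm' (integrable_ind (mΩ := mΩ) hGg) hH
    have e8 : ∫ ω in H, ind Gg ω ∂(μ[|Ts ∩ Vg]) = (((μ[|Ts ∩ Vg])) (Gg ∩ H)).toReal :=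
      setIntegral_ind (mΩ := mΩ) hGg hHΩ
    have m1 : ((μ[|Ts ∩ Vg]) (Gg ∩ H)) = (μ (Ts ∩ Vg))⁻¹ * μ ((Ts ∩ Vg) ∩ (Gg ∩ H)) :=
      cond_apply (hTs.inter hVg) μ _
    have m2 : ν (Ts ∩ Gg ∩ H) = (μ Vg)⁻¹ * μ (Vg ∩ (Ts ∩ Gg ∩ H)) := cond_apply hVg μ _
    have hsets : (Ts ∩ Vg) ∩ (Gg ∩ H) = Vg ∩ (Ts ∩ Gg ∩ H) := by
      ext ω; simp only [mem_inter_iff]; tauto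
    have rhs : ∫ ω in H, ind (Ts ∩ Gg) ω ∂ν = (ν (Ts ∩ Gg ∩ H)).toReal :=
      setIntegral_ind (mΩ := mΩ) (hTs.inter hGg) hHΩ
    rw [l1, rhs, ← e2, ← e1, e3, e4]
    have hμint : ∫ ω in (Ts ∩ Vg) ∩ H, pg ω ∂μ = (μ ((Ts ∩ Vg) ∩ (Gg ∩ H))).toReal := by
      have := e5.symm.trans (e7.trans e8)
      rw [m1] at this
      have h2 : (μ (Ts ∩ Vg)).toReal * ((μ (Ts ∩ Vg)).toReal⁻¹ * ∫ ω in (Ts ∩ Vg) ∩ H, pg ω ∂μ)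
          = (μ (Ts ∩ Vg)).toReal * (((μ (Ts ∩ Vg))⁻¹ * μ ((Ts ∩ Vg) ∩ (Gg ∩ H))).toReal) := by
        rw [this]
      rw [ENNReal.toReal_mul, ENNReal.toReal_inv] at h2
      field_simp at h2
      linarith [h2]
    rw [hμint, hsets, m2, ENNReal.toReal_mul, ENNReal.toReal_inv]
  · exact (hpgm.stronglyMeasurable.const_mul k).aestronglyMeasurable

end AuxB
/-- **Bias decomposition with undefined potential outcomes, transport part (Theorem 3,
second display).**  With `V_g = 1{N ≥ g}`, `τ(g) = Y^(1,g) − Y^(0,g)` (meaningful on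
`{V_g = 1}`) and
`υ(g) = P(G=g|S=1,V_g=1,𝓗)·P(V_g=1|S=1) − P(G=g|S=2,V_g=1,𝓗)·P(V_g=1|S=2)`,
under the reference-population assumptions (under `P(·|S=1)`) and the transportability
assumptions with undefined potential outcomes,
`ψ − φ₂ = (ψ − φ₁) + Σ_g [Cov(τ(g), υ(g) | V_g=1) + E[τ(g)|V_g=1]·(P(G=g|S=1) − P(G=g|S=2))]`. -/
theorem bias_decomposition_undefined_potential_outcomes_phi2
    {Ω : Type*} [mΩ : MeasurableSpace Ω] [StandardBorelSpace Ω] [Nonempty Ω]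
    (μ : Measure Ω) [IsProbabilityMeasure μ]
    (gmax : ℕ)
    (S A N G : Ω → ℕ)
    (hS : ∀ ω, S ω = 1 ∨ S ω = 2) (hSmeas : Measurable S)
    (hA : ∀ ω, A ω ≤ 1) (hN : ∀ ω, N ω ≤ gmax)
    (hGN : ∀ᵐ ω ∂μ, G ω ≤ N ω)
    (hAmeas : Measurable A) (hNmeas : Measurable N) (hGmeas : Measurable G)
    -- positivity for the population indicator, N and V_g
    (hSNpos : ∀ s, (s = 1 ∨ s = 2) → ∀ n ≤ gmax, 0 < μ {ω | S ω = s ∧ N ω = n})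
    (hSVpos : ∀ s, (s = 1 ∨ s = 2) → ∀ g ≤ gmax, 0 < μ {ω | S ω = s ∧ g ≤ N ω})
    (Ypo : ℕ → ℕ → Ω → ℝ)
    (hYpomeas : ∀ a ≤ 1, ∀ g ≤ gmax, Measurable (Ypo a g))
    (hYposq : ∀ a ≤ 1, ∀ g ≤ gmax, MemLp (Ypo a g) 2 μ)
    (Ya : ℕ → Ω → ℝ)
    (hYa : ∀ a ω, Ya a ω = ∑ g ∈ Finset.range (gmax + 1), ind {ω' | G ω' = g} ω * Ypo a g ω)
    (Y : Ω → ℝ)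
    (hY : ∀ ω, Y ω = ind {ω' | A ω' = 1} ω * Ya 1 ω + ind {ω' | A ω' = 0} ω * Ya 0 ω)
    -- reference-population assumptions, under P₁ = μ[|{S=1}]
    (mG mF : MeasurableSpace Ω) (hGF : mG ≤ mF) (hF : mF ≤ mΩ)
    (π e ε : ℕ → Ω → ℝ)
    (hπ : ∀ a, π a = (μ[|{ω | S ω = 1}])[ind {ω | A ω = a} | mF])
    (he : ∀ a, e a = (μ[|{ω | S ω = 1}])[ind {ω | A ω = a} | mG])
    -- the propensity scores do not depend on N
    (hπN : ∀ a ≤ 1,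
      (μ[|{ω | S ω = 1}])[ind {ω | A ω = a} | mF ⊔ MeasurableSpace.comap N inferInstance]
        =ᵐ[μ[|{ω | S ω = 1}]] π a)
    (heN : ∀ a ≤ 1,
      (μ[|{ω | S ω = 1}])[ind {ω | A ω = a} | mG ⊔ MeasurableSpace.comap N inferInstance]
        =ᵐ[μ[|{ω | S ω = 1}]] e a)
    (hπpos : ∀ a ≤ 1, ∀ᵐ ω ∂(μ[|{ω | S ω = 1}]), 0 < π a ω)
    (hepos : ∀ a ≤ 1, ∀ᵐ ω ∂(μ[|{ω | S ω = 1}]), 0 < e a ω)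
    -- conditional exchangeability given (𝓕, N) under P₁
    (hexch : ∀ a ≤ 1,
      CondIndepFun (mF ⊔ MeasurableSpace.comap N inferInstance)
        (sup_le hF hNmeas.comap_le) (Ya a) A (μ[|{ω | S ω = 1}]))
    (hε : ∀ a ω, ε a ω = π a ω / e a ω)
    (hεint : ∀ a ≤ 1, Integrable (ε a) (μ[|{ω | S ω = 1}]))
    (hεYint : ∀ a ≤ 1, Integrable (fun ω => Ya a ω * ε a ω) (μ[|{ω | S ω = 1}]))
    (hεY0int : ∀ a ≤ 1, Integrable (fun ω => Ypo a 0 ω * ε a ω) (μ[|{ω | S ω = 1}]))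
    (hwint : ∀ a ≤ 1,
      Integrable (fun ω => ind {ω' | A ω' = a} ω * Y ω / e a ω) (μ[|{ω | S ω = 1}]))
    -- transportability assumptions with undefined potential outcomes
    (mH : MeasurableSpace Ω) (hH : mH ≤ mΩ)
    (pg : ℕ → ℕ → Ω → ℝ)
    (hpg : ∀ s g, pg s g
      = (μ[|{ω | S ω = s ∧ g ≤ N ω}])[ind {ω | G ω = g} | mH])
    (hpgbdd : ∀ s g, ∀ᵐ ω ∂μ, 0 ≤ pg s g ω ∧ pg s g ω ≤ 1)
    (hpgmeas : ∀ s g, Measurable[mH] (pg s g))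
    (htrans : ∀ a ≤ 1, ∀ g ≤ gmax,
      CondIndepFun mH hH (Ypo a g) (fun ω => (S ω, G ω)) (μ[|{ω | g ≤ N ω}]))
    (hSH : ∀ g ≤ gmax,
      Indep (MeasurableSpace.comap S inferInstance) mH (μ[|{ω | g ≤ N ω}])) :
    -- ψ − φ₂ = (ψ − φ₁) + T₃
    (((∫ ω, ind {ω' | A ω' = 1} ω * Y ω / e 1 ω ∂(μ[|{ω | S ω = 1}]))
        - ∫ ω, ind {ω' | A ω' = 0} ω * Y ω / e 0 ω ∂(μ[|{ω | S ω = 1}]))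
      - ∫ ω, (Ya 1 ω - Ya 0 ω) ∂(μ[|{ω | S ω = 2}]))
    = (((∫ ω, ind {ω' | A ω' = 1} ω * Y ω / e 1 ω ∂(μ[|{ω | S ω = 1}]))
        - ∫ ω, ind {ω' | A ω' = 0} ω * Y ω / e 0 ω ∂(μ[|{ω | S ω = 1}]))
      - ∫ ω, (Ya 1 ω - Ya 0 ω) ∂(μ[|{ω | S ω = 1}]))
      + ∑ g ∈ Finset.range (gmax + 1),
          (cov (μ[|{ω | g ≤ N ω}]) (fun ω => Ypo 1 g ω - Ypo 0 g ω)
              (fun ω =>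
                pg 1 g ω * ((μ[|{ω' | S ω' = 1}]) {ω' | g ≤ N ω'}).toReal
                  - pg 2 g ω * ((μ[|{ω' | S ω' = 2}]) {ω' | g ≤ N ω'}).toReal)
            + (∫ ω, (Ypo 1 g ω - Ypo 0 g ω) ∂(μ[|{ω | g ≤ N ω}]))
                * (((μ[|{ω | S ω = 1}]) {ω | G ω = g}).toReal
                    - ((μ[|{ω | S ω = 2}]) {ω | G ω = g}).toReal)) := by
  letI : MeasurableSpace Ω := mΩ
  classical
  -- measurable sets
  have hTsM : ∀ s : ℕ, MeasurableSet[mΩ] {ω | S ω = s} :=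
    fun s => hSmeas (measurableSet_singleton s)
  have hVgM : ∀ g : ℕ, MeasurableSet[mΩ] {ω | g ≤ N ω} :=
    fun g => hNmeas measurableSet_Ici
  have hGgM : ∀ g : ℕ, MeasurableSet[mΩ] {ω | G ω = g} :=
    fun g => hGmeas (measurableSet_singleton g)
  -- positivity
  have hTVne : ∀ s, (s = 1 ∨ s = 2) → ∀ g, g ≤ gmax →
      μ ({ω | S ω = s} ∩ {ω | g ≤ N ω}) ≠ 0 := by
    intro s hs g hg
    have := hSVpos s hs g hg
    rw [show {ω | S ω = s} ∩ {ω | g ≤ N ω} = {ω | S ω = s ∧ g ≤ N ω} from rfl]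
    exact this.ne'
  have hVne : ∀ g, g ≤ gmax → μ {ω | g ≤ N ω} ≠ 0 := by
    intro g hg
    have h1 := hSVpos 1 (Or.inl rfl) g hg
    have h2 : μ {ω | S ω = 1 ∧ g ≤ N ω} ≤ μ {ω | g ≤ N ω} :=
      measure_mono fun ω hω => hω.2
    exact (lt_of_lt_of_le h1 h2).ne'
  have hTne : ∀ s, (s = 1 ∨ s = 2) → μ {ω | S ω = s} ≠ 0 := by
    intro s hs
    have h1 := hSVpos s hs 0 (Nat.zero_le _)
    have h2 : μ {ω | S ω = s ∧ 0 ≤ N ω} ≤ μ {ω | S ω = s} :=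
      measure_mono fun ω hω => hω.1
    exact (lt_of_lt_of_le h1 h2).ne'
  -- integrability of potential outcomes
  have hYint : ∀ a, a ≤ 1 → ∀ g, g ≤ gmax → Integrable (Ypo a g) μ :=
    fun a ha g hg => (hYposq a ha g hg).integrable one_le_two
  -- conditional probability identity: E_ν[1_{S=s,G=g} | 𝓗] = ν{S=s} · pg s g
  have hq : ∀ s, (s = 1 ∨ s = 2) → ∀ g, g ≤ gmax →
      (μ[|{ω | g ≤ N ω}])[ind ({ω | S ω = s} ∩ {ω | G ω = g}) | mH]
        =ᵐ[μ[|{ω | g ≤ N ω}]]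
      fun ω => ((μ[|{ω | g ≤ N ω}]) {ω | S ω = s}).toReal * pg s g ω := by
    intro s hs g hg
    haveI : IsProbabilityMeasure (μ[|{ω | g ≤ N ω}]) :=
      cond_isProbabilityMeasure (hVne g hg)
    refine condexp_ind_eq_pg (mΩ := mΩ) μ hH (hTsM s) (hVgM g) (hGgM g)
      (hTVne s hs g hg) (hVne g hg) ?_ ?_ (hpgmeas s g) (hpgbdd s g)
    · intro h hmeas hbdd
      exact indep_integral (mΩ := mΩ) hH hSmeas (hSH g hg) hmeas 1 hbdd s
    · exact hpg s g
  -- KEY1: per-arm transport identity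
  have key1 : ∀ s, (s = 1 ∨ s = 2) → ∀ a, a ≤ 1 → ∀ g, g ≤ gmax →
      ∫ ω, ind {ω' | G ω' = g} ω * Ypo a g ω ∂(μ[|{ω | S ω = s}])
        = ((μ[|{ω | S ω = s}]) {ω | g ≤ N ω}).toReal
            * ∫ ω, Ypo a g ω * pg s g ω ∂(μ[|{ω | g ≤ N ω}]) := by
    intro s hs a ha g hg
    haveI hνP : IsProbabilityMeasure (μ[|{ω | g ≤ N ω}]) :=
      cond_isProbabilityMeasure (hVne g hg)
    set ν := μ[|{ω | g ≤ N ω}] with hνdef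
    set Ts := {ω | S ω = s} with hTs
    set Vg := {ω | g ≤ N ω} with hVg
    set Gg := {ω | G ω = g} with hGg
    set X := Ypo a g with hX
    have hXm : Measurable[mΩ] X := hYpomeas a ha g hg
    -- Step 0/1: reduce to μ-integral over Ts
    have s0 : ∫ ω, ind Gg ω * X ω ∂(μ[|Ts])
        = (μ Ts).toReal⁻¹ * ∫ ω in Ts, ind Gg ω * X ω ∂μ :=
      integral_cond μ Ts _
    have s1 : ∫ ω in Ts, ind Gg ω * X ω ∂μ = ∫ ω, ind (Ts ∩ Gg) ω * X ω ∂μ := by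
      rw [← integral_indicator (hTsM s)]
      congr 1
      funext ω
      by_cases h1 : S ω = s <;> by_cases h2 : G ω = g <;>
        simp [ind, indicator, h1, h2, hTs, hGg]
    -- Step 2: insert Vg (a.e. w.r.t. μ)
    have s2 : ∫ ω, ind (Ts ∩ Gg) ω * X ω ∂μ = ∫ ω in Vg, ind (Ts ∩ Gg) ω * X ω ∂μ := by
      rw [← integral_indicator (hVgM g)]
      refine integral_congr_ae ?_
      filter_upwards [hGN] with ω hω
      by_cases hv : ω ∈ Vg
      · simp [indicator, hv]
        intro h; exact absurd hv (not_le.2 h)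
      · have hGne : ω ∉ Gg := by
          intro hG
          exact hv (by simpa [hVg, hG.symm ▸ hω] using (hG ▸ hω : (g : ℕ) ≤ N ω))
        have : ω ∉ Ts ∩ Gg := fun hmem => hGne hmem.2
        simp [indicator, hv, ind, this]
    -- Step 3: pass to ν
    have haVg : (μ Vg).toReal ≠ 0 := by
      simp only [ne_eq, ENNReal.toReal_eq_zero_iff, measure_ne_top, or_false]
      exact hVne g hg
    have s3 : ∫ ω in Vg, ind (Ts ∩ Gg) ω * X ω ∂μ
        = (μ Vg).toReal * ∫ ω, ind (Ts ∩ Gg) ω * X ω ∂ν := by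
      rw [hνdef, integral_cond μ Vg _]
      field_simp
    -- Step 4: conditional independence
    have hW : Measurable[mΩ] (fun ω => (S ω, G ω)) := hSmeas.prodMk hGmeas
    have hBW : Ts ∩ Gg = (fun ω => (S ω, G ω)) ⁻¹' {(s, g)} := by
      ext ω
      simp [hTs, hGg, Prod.ext_iff, mem_preimage]
    have s4 : ∫ ω, ind (Ts ∩ Gg) ω * X ω ∂ν
        = ∫ ω, X ω * (ν[ind (Ts ∩ Gg)|mH]) ω ∂ν := by
      rw [show (∫ ω, ind (Ts ∩ Gg) ω * X ω ∂ν) = ∫ ω, X ω * ind (Ts ∩ Gg) ω ∂ν from by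
        simp [mul_comm]]
      rw [hBW]
      exact integral_mul_ind_of_condIndep (mΩ := mΩ) ν hH hXm hW
        (htrans a ha g hg) {(s, g)}
    -- Step 5: plug in pg
    have s5 : ∫ ω, X ω * (ν[ind (Ts ∩ Gg)|mH]) ω ∂ν
        = (ν Ts).toReal * ∫ ω, X ω * pg s g ω ∂ν := by
      rw [show ((ν Ts).toReal * ∫ ω, X ω * pg s g ω ∂ν)
          = ∫ ω, X ω * ((ν Ts).toReal * pg s g ω) ∂ν from by
        rw [← integral_const_mul]; congr 1; funext ω; ring]
      refine integral_congr_ae ?_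
      filter_upwards [hq s hs g hg] with ω hω
      rw [hω]
    -- assemble with constants
    rw [s0, s1, s2, s3, s4, s5]
    have m1 : (μ[|Ts]) Vg = (μ Ts)⁻¹ * μ (Ts ∩ Vg) := cond_apply (hTsM s) μ _
    have m2 : ν Ts = (μ Vg)⁻¹ * μ (Vg ∩ Ts) := cond_apply (hVgM g) μ _
    rw [m1, m2, ENNReal.toReal_mul, ENNReal.toReal_mul, ENNReal.toReal_inv, ENNReal.toReal_inv,
      inter_comm Vg Ts]
    show (μ Ts).toReal⁻¹ * ((μ Vg).toReal * ((μ Vg).toReal⁻¹ * (μ (Ts ∩ Vg)).toReal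
        * ∫ ω, X ω * pg s g ω ∂ν))
      = (μ Ts).toReal⁻¹ * (μ (Ts ∩ Vg)).toReal * ∫ ω, X ω * pg s g ω ∂ν
    field_simp
  -- KEY2: transported neighborhood-treatment probabilities
  have key2 : ∀ s, (s = 1 ∨ s = 2) → ∀ g, g ≤ gmax →
      ((μ[|{ω | S ω = s}]) {ω | g ≤ N ω}).toReal
          * ∫ ω, pg s g ω ∂(μ[|{ω | g ≤ N ω}])
        = ((μ[|{ω | S ω = s}]) {ω | G ω = g}).toReal := by
    intro s hs g hg
    haveI hνP : IsProbabilityMeasure (μ[|{ω | g ≤ N ω}]) :=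
      cond_isProbabilityMeasure (hVne g hg)
    haveI : SigmaFinite ((μ[|{ω | g ≤ N ω}]).trim hH) := (isFiniteMeasure_trim hH).toSigmaFinite
    set ν := μ[|{ω | g ≤ N ω}] with hνdef
    set Ts := {ω | S ω = s} with hTs
    set Vg := {ω | g ≤ N ω} with hVg
    set Gg := {ω | G ω = g} with hGg
    -- integral of the conditional expectation
    have i1 : ∫ ω, (ν[ind (Ts ∩ Gg)|mH]) ω ∂ν = (ν (Ts ∩ Gg)).toReal := by
      rw [integral_condExp hH, integral_ind (mΩ := mΩ) ((hTsM s).inter (hGgM g))]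
    have i2 : ∫ ω, (ν[ind (Ts ∩ Gg)|mH]) ω ∂ν
        = (ν Ts).toReal * ∫ ω, pg s g ω ∂ν := by
      rw [← integral_const_mul]
      exact integral_congr_ae (by filter_upwards [hq s hs g hg] with ω hω using hω)
    have hpgint : (ν Ts).toReal * ∫ ω, pg s g ω ∂ν = (ν (Ts ∩ Gg)).toReal := by
      rw [← i2, i1]
    -- measure identities
    have m1 : (μ[|Ts]) Vg = (μ Ts)⁻¹ * μ (Ts ∩ Vg) := cond_apply (hTsM s) μ _
    have m2 : ν Ts = (μ Vg)⁻¹ * μ (Vg ∩ Ts) := cond_apply (hVgM g) μ _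
    have m3 : ν (Ts ∩ Gg) = (μ Vg)⁻¹ * μ (Vg ∩ (Ts ∩ Gg)) := cond_apply (hVgM g) μ _
    have m4 : (μ[|Ts]) Gg = (μ Ts)⁻¹ * μ (Ts ∩ Gg) := cond_apply (hTsM s) μ _
    have mae : μ (Vg ∩ (Ts ∩ Gg)) = μ (Ts ∩ Gg) := by
      refine measure_congr ?_
      have : ∀ᵐ ω ∂μ, (ω ∈ Vg ∩ (Ts ∩ Gg)) ↔ (ω ∈ Ts ∩ Gg) := by
        filter_upwards [hGN] with ω hω
        constructor
        · exact fun h => h.2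
        · rintro ⟨h1, h2⟩
          exact ⟨by { have : G ω = g := h2; rw [hVg]; exact le_of_eq_of_le this.symm hω }, h1, h2⟩
      exact Filter.eventuallyEq_set.2 this
    -- nonzero facts
    have haTs : (μ Ts).toReal ≠ 0 := by
      simp only [ne_eq, ENNReal.toReal_eq_zero_iff, measure_ne_top, or_false]
      exact hTne s hs
    have haVg : (μ Vg).toReal ≠ 0 := by
      simp only [ne_eq, ENNReal.toReal_eq_zero_iff, measure_ne_top, or_false]
      exact hVne g hg
    have haTV : (μ (Ts ∩ Vg)).toReal ≠ 0 := by
      simp only [ne_eq, ENNReal.toReal_eq_zero_iff, measure_ne_top, or_false]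
      exact hTVne s hs g hg
    have hνTs : (ν Ts).toReal ≠ 0 := by
      rw [m2, ENNReal.toReal_mul, ENNReal.toReal_inv, inter_comm Vg Ts]
      intro hc
      rcases mul_eq_zero.1 hc with h | h
      · exact haVg (by simpa using inv_eq_zero.1 h)
      · exact haTV h
    -- conclude
    have goal' : ((μ[|Ts]) Vg).toReal * ((ν Ts).toReal * ∫ ω, pg s g ω ∂ν)
        = (ν Ts).toReal * ((μ[|Ts]) Gg).toReal := by
      rw [hpgint, m1, m2, m3, m4, mae, ENNReal.toReal_mul, ENNReal.toReal_mul,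
        ENNReal.toReal_mul, ENNReal.toReal_mul, ENNReal.toReal_inv, ENNReal.toReal_inv,
        inter_comm Vg Ts]
      ring
    have := mul_left_cancel₀ hνTs
      (show (ν Ts).toReal * (((μ[|Ts]) Vg).toReal * ∫ ω, pg s g ω ∂ν)
          = (ν Ts).toReal * ((μ[|Ts]) Gg).toReal from by
        rw [← goal']; ring)
    exact this
  -- decomposition of the ATE integrand by neighborhood treatment level
  have hsum : ∀ s, (s = 1 ∨ s = 2) →
      ∫ ω, (Ya 1 ω - Ya 0 ω) ∂(μ[|{ω | S ω = s}])
        = ∑ g ∈ Finset.range (gmax + 1),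
            ∫ ω, ind {ω' | G ω' = g} ω * (Ypo 1 g ω - Ypo 0 g ω) ∂(μ[|{ω | S ω = s}]) := by
    intro s hs
    have hintg : ∀ g ∈ Finset.range (gmax + 1),
        Integrable (fun ω => ind {ω' | G ω' = g} ω * (Ypo 1 g ω - Ypo 0 g ω))
          (μ[|{ω | S ω = s}]) := by
      intro g hg
      have hgle : g ≤ gmax := Nat.lt_succ_iff.1 (Finset.mem_range.1 hg)
      rw [ind_mul]
      exact (((hYint 1 le_rfl g hgle).sub (hYint 0 (Nat.zero_le 1) g hgle)).cond_meas
        _ (hTne s hs)).indicator (hGgM g)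
    have hpt : ∀ ω, Ya 1 ω - Ya 0 ω
        = ∑ g ∈ Finset.range (gmax + 1),
            ind {ω' | G ω' = g} ω * (Ypo 1 g ω - Ypo 0 g ω) := by
      intro ω
      rw [hYa 1 ω, hYa 0 ω, ← Finset.sum_sub_distrib]
      exact Finset.sum_congr rfl fun g _ => by ring
    calc ∫ ω, (Ya 1 ω - Ya 0 ω) ∂(μ[|{ω | S ω = s}])
        = ∫ ω, (∑ g ∈ Finset.range (gmax + 1),
            ind {ω' | G ω' = g} ω * (Ypo 1 g ω - Ypo 0 g ω)) ∂(μ[|{ω | S ω = s}]) := by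
          congr 1; funext ω; exact hpt ω
      _ = _ := integral_finset_sum _ hintg
  -- per-level identity
  have per_g : ∀ g, g ≤ gmax →
      (cov (μ[|{ω | g ≤ N ω}]) (fun ω => Ypo 1 g ω - Ypo 0 g ω)
          (fun ω => pg 1 g ω * ((μ[|{ω' | S ω' = 1}]) {ω' | g ≤ N ω'}).toReal
            - pg 2 g ω * ((μ[|{ω' | S ω' = 2}]) {ω' | g ≤ N ω'}).toReal)
        + (∫ ω, (Ypo 1 g ω - Ypo 0 g ω) ∂(μ[|{ω | g ≤ N ω}]))
            * (((μ[|{ω | S ω = 1}]) {ω | G ω = g}).toReal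
              - ((μ[|{ω | S ω = 2}]) {ω | G ω = g}).toReal))
      = ∫ ω, ind {ω' | G ω' = g} ω * (Ypo 1 g ω - Ypo 0 g ω) ∂(μ[|{ω | S ω = 1}])
        - ∫ ω, ind {ω' | G ω' = g} ω * (Ypo 1 g ω - Ypo 0 g ω) ∂(μ[|{ω | S ω = 2}]) := by
    intro g hg
    haveI hνP : IsProbabilityMeasure (μ[|{ω | g ≤ N ω}]) :=
      cond_isProbabilityMeasure (hVne g hg)
    set ν := μ[|{ω | g ≤ N ω}] with hνdef
    set c : ℕ → ℝ := fun s => ((μ[|{ω | S ω = s}]) {ω | g ≤ N ω}).toReal with hc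
    set P : ℕ → ℝ := fun s => ((μ[|{ω | S ω = s}]) {ω | G ω = g}).toReal with hP
    set τ : Ω → ℝ := fun ω => Ypo 1 g ω - Ypo 0 g ω with hτ
    have hτm : Measurable[mΩ] τ := (hYpomeas 1 le_rfl g hg).sub (hYpomeas 0 (Nat.zero_le 1) g hg)
    have hτi : Integrable τ ν :=
      ((hYint 1 le_rfl g hg).sub (hYint 0 (Nat.zero_le 1) g hg)).cond_meas _ (hVne g hg)
    have hpgmΩ : ∀ s, Measurable[mΩ] (pg s g) := fun s => (hpgmeas s g).mono hH le_rfl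
    have hpgb' : ∀ s, ∀ᵐ ω ∂ν, 0 ≤ pg s g ω ∧ pg s g ω ≤ 1 :=
      fun s => ae_cond (hpgbdd s g)
    have hpgiv : ∀ s, Integrable (pg s g) ν := by
      intro s
      refine integrable_of_ae_bdd (mΩ := mΩ) 1 (hpgmΩ s).aestronglyMeasurable ?_
      filter_upwards [hpgb' s] with ω hω using abs_le.2 ⟨by linarith [hω.1], hω.2⟩
    have hXpg : ∀ a, a ≤ 1 → ∀ s, Integrable (fun ω => Ypo a g ω * pg s g ω) ν := by
      intro a ha s
      refine ((hYint a ha g hg).cond_meas _ (hVne g hg)).abs.mono'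
        (((hYpomeas a ha g hg).mul (hpgmΩ s)).aestronglyMeasurable) ?_
      filter_upwards [hpgb' s] with ω hω
      rw [Real.norm_eq_abs, abs_mul]
      have h2 : |pg s g ω| ≤ 1 := abs_le.2 ⟨by linarith [hω.1], hω.2⟩
      nlinarith [abs_nonneg (Ypo a g ω), abs_nonneg (pg s g ω)]
    have hτpg : ∀ s, Integrable (fun ω => τ ω * pg s g ω) ν := by
      intro s
      have : (fun ω => τ ω * pg s g ω)
          = fun ω => Ypo 1 g ω * pg s g ω - Ypo 0 g ω * pg s g ω := by
        funext ω; rw [hτ]; ring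
      rw [this]
      exact (hXpg 1 le_rfl s).sub (hXpg 0 (Nat.zero_le 1) s)
    -- the integral of υ
    have hintυ : ∫ ω, (pg 1 g ω * c 1 - pg 2 g ω * c 2) ∂ν = P 1 - P 2 := by
      rw [integral_sub ((hpgiv 1).mul_const (c 1)) ((hpgiv 2).mul_const (c 2)),
        integral_mul_const, integral_mul_const]
      have k1 := key2 1 (Or.inl rfl) g hg
      have k2 := key2 2 (Or.inr rfl) g hg
      rw [hP]
      simp only [hc]
      linarith [k1, k2]
    -- the integral of τ·υ
    have hintτυ : ∫ ω, τ ω * (pg 1 g ω * c 1 - pg 2 g ω * c 2) ∂ν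
        = c 1 * ∫ ω, τ ω * pg 1 g ω ∂ν - c 2 * ∫ ω, τ ω * pg 2 g ω ∂ν := by
      have : (fun ω => τ ω * (pg 1 g ω * c 1 - pg 2 g ω * c 2))
          = fun ω => (τ ω * pg 1 g ω) * c 1 - (τ ω * pg 2 g ω) * c 2 := by
        funext ω; ring
      rw [show (∫ ω, τ ω * (pg 1 g ω * c 1 - pg 2 g ω * c 2) ∂ν)
          = ∫ ω, ((τ ω * pg 1 g ω) * c 1 - (τ ω * pg 2 g ω) * c 2) ∂ν from by rw [← this],
        integral_sub ((hτpg 1).mul_const (c 1)) ((hτpg 2).mul_const (c 2)),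
        integral_mul_const, integral_mul_const]
      ring
    -- the observed-group integrals via key1
    have hIg : ∀ s, (s = 1 ∨ s = 2) →
        ∫ ω, ind {ω' | G ω' = g} ω * τ ω ∂(μ[|{ω | S ω = s}])
          = c s * ∫ ω, τ ω * pg s g ω ∂ν := by
      intro s hs
      have hi1 : Integrable (fun ω => ind {ω' | G ω' = g} ω * Ypo 1 g ω) (μ[|{ω | S ω = s}]) := by
        rw [ind_mul]
        exact ((hYint 1 le_rfl g hg).cond_meas _ (hTne s hs)).indicator (hGgM g)
      have hi0 : Integrable (fun ω => ind {ω' | G ω' = g} ω * Ypo 0 g ω) (μ[|{ω | S ω = s}]) := by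
        rw [ind_mul]
        exact ((hYint 0 (Nat.zero_le 1) g hg).cond_meas _ (hTne s hs)).indicator (hGgM g)
      have e0 : ∫ ω, ind {ω' | G ω' = g} ω * τ ω ∂(μ[|{ω | S ω = s}])
          = ∫ ω, (ind {ω' | G ω' = g} ω * Ypo 1 g ω
              - ind {ω' | G ω' = g} ω * Ypo 0 g ω) ∂(μ[|{ω | S ω = s}]) := by
        congr 1; funext ω; rw [hτ]; ring
      rw [e0, integral_sub hi1 hi0, key1 s hs 1 le_rfl g hg, key1 s hs 0 (Nat.zero_le 1) g hg]
      have eτ : ∫ ω, τ ω * pg s g ω ∂ν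
          = ∫ ω, Ypo 1 g ω * pg s g ω ∂ν - ∫ ω, Ypo 0 g ω * pg s g ω ∂ν := by
        rw [← integral_sub (hXpg 1 le_rfl s) (hXpg 0 (Nat.zero_le 1) s)]
        congr 1; funext ω; rw [hτ]; ring
      rw [eτ, hc]
      ring
    -- put everything together
    have hcov : cov ν τ (fun ω => pg 1 g ω * c 1 - pg 2 g ω * c 2)
        = (c 1 * ∫ ω, τ ω * pg 1 g ω ∂ν - c 2 * ∫ ω, τ ω * pg 2 g ω ∂ν)
          - (∫ ω, τ ω ∂ν) * (P 1 - P 2) := by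
      rw [cov, hintυ, hintτυ]
    rw [hIg 1 (Or.inl rfl), hIg 2 (Or.inr rfl)]
    rw [show (cov (μ[|{ω | g ≤ N ω}]) (fun ω => Ypo 1 g ω - Ypo 0 g ω)
          (fun ω => pg 1 g ω * ((μ[|{ω' | S ω' = 1}]) {ω' | g ≤ N ω'}).toReal
            - pg 2 g ω * ((μ[|{ω' | S ω' = 2}]) {ω' | g ≤ N ω'}).toReal))
        = cov ν τ (fun ω => pg 1 g ω * c 1 - pg 2 g ω * c 2) from rfl]
    rw [hcov]
    ring
  -- final assembly
  have hfinal : (∑ g ∈ Finset.range (gmax + 1),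
        (cov (μ[|{ω | g ≤ N ω}]) (fun ω => Ypo 1 g ω - Ypo 0 g ω)
            (fun ω => pg 1 g ω * ((μ[|{ω' | S ω' = 1}]) {ω' | g ≤ N ω'}).toReal
              - pg 2 g ω * ((μ[|{ω' | S ω' = 2}]) {ω' | g ≤ N ω'}).toReal)
          + (∫ ω, (Ypo 1 g ω - Ypo 0 g ω) ∂(μ[|{ω | g ≤ N ω}]))
              * (((μ[|{ω | S ω = 1}]) {ω | G ω = g}).toReal
                - ((μ[|{ω | S ω = 2}]) {ω | G ω = g}).toReal)))
      = ∫ ω, (Ya 1 ω - Ya 0 ω) ∂(μ[|{ω | S ω = 1}])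
        - ∫ ω, (Ya 1 ω - Ya 0 ω) ∂(μ[|{ω | S ω = 2}]) := by
    rw [hsum 1 (Or.inl rfl), hsum 2 (Or.inr rfl), ← Finset.sum_sub_distrib]
    refine Finset.sum_congr rfl fun g hgmem => ?_
    exact per_g g (Nat.lt_succ_iff.1 (Finset.mem_range.1 hgmem))
  linarith [hfinal]
end
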